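/- Let 𝒞 be a collection of cells over a field K and let W ⊆ V(𝒞) be an admissible set of 𝒞. Then P_W(𝒞) = (x_w : w ∈ W) + L_{𝒞_W} is a prime ideal of S_𝒞 containing the adjacent 2-minor ideal I_adj(𝒞). -/

import Mathlib

open MvPolynomial

/-- The vertex set of the cell with lower-left corner `a`. -/
def cellVerts (a : ℤ × ℤ) : Finset (ℤ × ℤ) :=
  {a, a + (1, 0), a + (0, 1), a + (1, 1)}

/-- The edges of the cell with lower-left corner `a`, recorded as ordered pairs
of their two endpoints: `{a,c}`, `{c,b}`, `{b,d}`, `{a,d}` where `b = a+(1,1)`,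
`c = a+(0,1)`, `d = a+(1,0)`. -/
def cellEdges (a : ℤ × ℤ) : Finset ((ℤ × ℤ) × (ℤ × ℤ)) :=
  {(a, a + (0, 1)), (a + (0, 1), a + (1, 1)), (a + (1, 1), a + (1, 0)), (a, a + (1, 0))}

/-- The vertex set of a collection of cells; cells are recorded by their
lower-left corners. -/
def verts (C : Finset (ℤ × ℤ)) : Finset (ℤ × ℤ) :=
  C.biUnion cellVerts

lemma mem_verts {C : Finset (ℤ × ℤ)} {a v : ℤ × ℤ} (ha : a ∈ C)
    (hv : v ∈ cellVerts a) : v ∈ verts C :=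
  Finset.mem_biUnion.mpr ⟨a, ha, hv⟩

lemma corner_mem00 (a : ℤ × ℤ) : a ∈ cellVerts a := by simp [cellVerts]
lemma corner_mem10 (a : ℤ × ℤ) : a + (1, 0) ∈ cellVerts a := by simp [cellVerts]
lemma corner_mem01 (a : ℤ × ℤ) : a + (0, 1) ∈ cellVerts a := by simp [cellVerts]
lemma corner_mem11 (a : ℤ × ℤ) : a + (1, 1) ∈ cellVerts a := by simp [cellVerts]

/-- The adjacent 2-minor ideal `I_adj(𝒞)` of a collection of cells, inside the
polynomial ring `S_𝒞 = K[x_v : v ∈ V(𝒞)]`. -/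
noncomputable def adjIdeal (K : Type*) [Field K] (C : Finset (ℤ × ℤ)) :
    Ideal (MvPolynomial {v // v ∈ verts C} K) :=
  Ideal.span {f | ∃ a, ∃ ha : a ∈ C,
    f = X ⟨a, mem_verts ha (corner_mem00 a)⟩ *
          X ⟨a + (1, 1), mem_verts ha (corner_mem11 a)⟩ -
        X ⟨a + (0, 1), mem_verts ha (corner_mem01 a)⟩ *
          X ⟨a + (1, 0), mem_verts ha (corner_mem10 a)⟩}

/-- The vector `v_C = e_a + e_b - e_c - e_d ∈ ℤ^{V(𝒞)}` attached to the cell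
with lower-left corner `a` (so `b = a+(1,1)`, `c = a+(0,1)`, `d = a+(1,0)`). -/
def cellVec (C : Finset (ℤ × ℤ)) (a : ℤ × ℤ) : {v // v ∈ verts C} → ℤ :=
  fun w => ((if w.1 = a then 1 else 0) + (if w.1 = a + (1, 1) then 1 else 0)
    - (if w.1 = a + (0, 1) then 1 else 0)) - (if w.1 = a + (1, 0) then 1 else 0)

/-- The lattice `Λ_𝒟 ⊆ ℤ^{V(𝒞)}` generated by the vectors `v_C`, `C ∈ 𝒟`,
for a subcollection `𝒟` of `𝒞`. -/
def cellLattice (C : Finset (ℤ × ℤ)) (D : Set (ℤ × ℤ)) :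
    AddSubgroup ({v // v ∈ verts C} → ℤ) :=
  AddSubgroup.closure {g | ∃ a ∈ D, g = cellVec C a}

/-- The lattice ideal `L_𝒟 ⊆ S_𝒞` of a subcollection `𝒟` of `𝒞`. -/
noncomputable def latticeIdeal (K : Type*) [Field K] (C : Finset (ℤ × ℤ))
    (D : Set (ℤ × ℤ)) : Ideal (MvPolynomial {v // v ∈ verts C} K) :=
  Ideal.span {f | ∃ e ∈ cellLattice C D,
    f = (∏ w, X w ^ (e w).toNat) - ∏ w, X w ^ (-(e w)).toNat}

/-- `W ⊆ V(𝒞)` is admissible: for each cell `C ∈ 𝒞`, either `W ∩ C = ∅` or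
`W ∩ C` contains an edge of `C`. -/
def Admissible (C : Finset (ℤ × ℤ)) (W : Set (ℤ × ℤ)) : Prop :=
  W ⊆ ↑(verts C) ∧ ∀ a ∈ C, (∀ v ∈ cellVerts a, v ∉ W) ∨
    ∃ e ∈ cellEdges a, e.1 ∈ W ∧ e.2 ∈ W

/-- The subcollection `𝒞_W` of cells of `𝒞` disjoint from `W`. -/
def subcollW (C : Finset (ℤ × ℤ)) (W : Set (ℤ × ℤ)) : Set (ℤ × ℤ) :=
  {a | a ∈ C ∧ ∀ v ∈ cellVerts a, v ∉ W}

/-- The ideal `P_W(𝒞) = (x_w : w ∈ W) + L_{𝒞_W}`. -/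
noncomputable def PW (K : Type*) [Field K] (C : Finset (ℤ × ℤ))
    (W : Set (ℤ × ℤ)) : Ideal (MvPolynomial {v // v ∈ verts C} K) :=
  Ideal.span {f | ∃ v : {v // v ∈ verts C}, v.1 ∈ W ∧ f = X v} +
    latticeIdeal K C (subcollW C W)

/-- The height of an ideal: the infimum of `Order.height 𝔭` over the prime
ideals `𝔭` containing it (equivalently, over its minimal primes); for a prime
ideal this is just its height. -/
noncomputable def idealHeight {R : Type*} [CommRing R] (I : Ideal R) : ℕ∞ :=
  ⨅ p ∈ {p : PrimeSpectrum R | I ≤ p.asIdeal}, Order.height p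

/-- A collection of cells is weakly connected if any two of its cells are
joined by a sequence of cells of the collection in which consecutive cells
share at least one vertex. -/
def WeaklyConnected (C : Finset (ℤ × ℤ)) : Prop :=
  ∀ a ∈ C, ∀ b ∈ C, Relation.ReflTransGen
    (fun p q => p ∈ C ∧ q ∈ C ∧ ((cellVerts p ∩ cellVerts q).Nonempty)) a b

/-- `𝒞` contains a square tetromino. -/
def HasSquareTetromino (C : Finset (ℤ × ℤ)) : Prop :=
  ∃ a : ℤ × ℤ, a ∈ C ∧ a + (1, 0) ∈ C ∧ a + (0, 1) ∈ C ∧ a + (1, 1) ∈ C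

/-- `𝒞` contains an X-pentomino. -/
def HasXPentomino (C : Finset (ℤ × ℤ)) : Prop :=
  ∃ a : ℤ × ℤ, a ∈ C ∧ a + (1, 0) ∈ C ∧ a - (1, 0) ∈ C ∧
    a + (0, 1) ∈ C ∧ a - (0, 1) ∈ C

/-- Row convexity of a collection of cells. -/
def RowConvex (C : Finset (ℤ × ℤ)) : Prop :=
  ∀ a ∈ C, ∀ b ∈ C, a.2 = b.2 → ∀ r : ℤ, a.1 ≤ r → r ≤ b.1 → (r, a.2) ∈ C

/-- Column convexity of a collection of cells. -/
def ColConvex (C : Finset (ℤ × ℤ)) : Prop :=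
  ∀ a ∈ C, ∀ b ∈ C, a.1 = b.1 → ∀ s : ℤ, a.2 ≤ s → s ≤ b.2 → (a.1, s) ∈ C

namespace Stmt4Aux

abbrev Vx (C : Finset (ℤ × ℤ)) := {v // v ∈ verts C}

/-- The generating set of the lattice. -/
def latS (C : Finset (ℤ × ℤ)) (D : Set (ℤ × ℤ)) : Set (Vx C → ℤ) :=
  {g | ∃ a ∈ D, g = cellVec C a}

/-- The lattice as a `ℤ`-submodule. -/
noncomputable def Lam (C : Finset (ℤ × ℤ)) (D : Set (ℤ × ℤ)) : Submodule ℤ (Vx C → ℤ) :=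
  Submodule.span ℤ (latS C D)

lemma mem_cellLattice_iff {C : Finset (ℤ × ℤ)} {D : Set (ℤ × ℤ)} {e : Vx C → ℤ} :
    e ∈ cellLattice C D ↔ e ∈ Lam C D := by
  constructor
  · intro h
    have : cellLattice C D ≤ (Lam C D).toAddSubgroup :=
      AddSubgroup.closure_le _ |>.2 (fun g hg => Submodule.subset_span hg)
    exact this h
  · intro h
    have : Lam C D ≤ AddSubgroup.toIntSubmodule (cellLattice C D) :=
      Submodule.span_le.2 (fun g hg => AddSubgroup.subset_closure hg)
    exact this h

lemma cellVec_apply {C : Finset (ℤ × ℤ)} (a : ℤ × ℤ) (w : Vx C) :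
    cellVec C a w = ((if w.1 = a then 1 else 0) + (if w.1 = a + (1, 1) then 1 else 0)
      - (if w.1 = a + (0, 1) then 1 else 0)) - (if w.1 = a + (1, 0) then 1 else 0) := rfl

lemma cellVec_pivot {C : Finset (ℤ × ℤ)} (a : ℤ × ℤ) (w : Vx C) (hw : w.1 = a + (1, 1)) :
    cellVec C a w = 1 := by
  rw [cellVec_apply, hw]
  simp only [Prod.ext_iff, Prod.fst_add, Prod.snd_add]
  split_ifs <;> omega

lemma cellVec_self {C : Finset (ℤ × ℤ)} (a : ℤ × ℤ) (w : Vx C) (hw : w.1 = a) :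
    cellVec C a w = 1 := by
  rw [cellVec_apply, hw]
  simp only [Prod.ext_iff, Prod.fst_add, Prod.snd_add]
  split_ifs <;> omega

lemma cellVec_pivot_other {C : Finset (ℤ × ℤ)} (a a' : ℤ × ℤ) (w : Vx C)
    (hw : w.1 = a + (1, 1)) (h : cellVec C a' w ≠ 0) :
    a' = a ∨ a'.1 + a'.2 > a.1 + a.2 := by
  rw [cellVec_apply, hw] at h
  simp only [Prod.ext_iff, Prod.fst_add, Prod.snd_add] at *
  split_ifs at h <;> omega

lemma cellVec_injOn {C : Finset (ℤ × ℤ)} {a a' : ℤ × ℤ} (ha : a ∈ C) (ha' : a' ∈ C)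
    (h : cellVec C a = cellVec C a') : a = a' := by
  have h1 := (cellVec_self (C := C) a ⟨a, mem_verts ha (corner_mem00 a)⟩ rfl).symm.trans
    (congrFun h ⟨a, mem_verts ha (corner_mem00 a)⟩)
  have h2 := (cellVec_pivot (C := C) a ⟨a + (1,1), mem_verts ha (corner_mem11 a)⟩ rfl).symm.trans
    (congrFun h ⟨a + (1,1), mem_verts ha (corner_mem11 a)⟩)
  rw [cellVec_apply] at h1 h2
  simp only [Prod.ext_iff, Prod.fst_add, Prod.snd_add] at *
  split_ifs at h1 h2 <;> omega

end Stmt4Aux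
namespace Stmt4Aux

lemma smul_mem_Lam {C : Finset (ℤ × ℤ)} {D : Set (ℤ × ℤ)} (hD : ∀ a ∈ D, a ∈ C)
    {n : ℤ} (hn : n ≠ 0) {x : Vx C → ℤ} (hx : n • x ∈ Lam C D) : x ∈ Lam C D := by
  classical
  obtain ⟨c, hsupp, hsum⟩ := Submodule.mem_span_set.1 hx
  -- a total "cell of a generator" function
  have hex : ∀ g : Vx C → ℤ, ∃ a : ℤ × ℤ, g ∈ c.support → a ∈ D ∧ g = cellVec C a := by
    intro g
    by_cases hg : g ∈ c.support
    · obtain ⟨a, haD, hEq⟩ := hsupp hg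
      exact ⟨a, fun _ => ⟨haD, hEq⟩⟩
    · exact ⟨0, fun h => absurd h hg⟩
  choose cell hcell using hex
  set s : (ℤ × ℤ) → ℤ := fun a => a.1 + a.2 with hs
  set μ : (Vx C → ℤ) → ℕ :=
    fun g => (c.support.filter (fun g' => s (cell g') > s (cell g))).card with hμ
  have key : ∀ N, ∀ g ∈ c.support, μ g = N → n ∣ c g := by
    intro N
    induction N using Nat.strong_induction_on with
    | _ N ih =>
      intro g hg hμg
      obtain ⟨haD, hgeq⟩ := hcell g hg
      have haC : cell g ∈ C := hD _ haD
      set a := cell g with ha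
      set w0 : Vx C := ⟨a + (1, 1), mem_verts haC (corner_mem11 a)⟩ with hw0
      have h1 : n * x w0 = ∑ g' ∈ c.support, c g' * g' w0 := by
        have := congrFun hsum w0
        rw [Finsupp.sum, Finset.sum_apply] at this
        simpa using this.symm
      have hdvd : ∀ g' ∈ c.support, g' ≠ g → n ∣ c g' * g' w0 := by
        intro g' hg' hne
        by_cases h0 : g' w0 = 0
        · rw [h0, mul_zero]
          exact dvd_zero n
        · obtain ⟨haD', hgeq'⟩ := hcell g' hg'
          have haC' : cell g' ∈ C := hD _ haD'
          have hor : cell g' = a ∨ s (cell g') > s a := by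
            have := cellVec_pivot_other a (cell g') w0 rfl (by rwa [← hgeq'])
            exact this
          rcases hor with h | h
          · exact absurd (hgeq'.trans (by rw [h, ← hgeq])) hne
          · have hμlt : μ g' < μ g := by
              apply Finset.card_lt_card
              constructor
              · intro g'' hg''
                simp only [Finset.mem_filter] at hg'' ⊢
                exact ⟨hg''.1, lt_trans h hg''.2⟩
              · intro hcon
                have : g' ∈ c.support.filter (fun g'' => s (cell g'') > s (cell g)) :=
                  Finset.mem_filter.2 ⟨hg', h⟩
                have := hcon this
                simp only [Finset.mem_filter] at this
                exact lt_irrefl _ this.2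
            exact Dvd.dvd.mul_right (ih (μ g') (hμg ▸ hμlt) g' hg' rfl) _
      have hgw0 : g w0 = 1 := by rw [hgeq]; exact cellVec_pivot a w0 rfl
      have hsplit : ∑ g' ∈ c.support, c g' * g' w0
          = c g + ∑ g' ∈ c.support.erase g, c g' * g' w0 := by
        rw [← Finset.add_sum_erase c.support (fun g' => c g' * g' w0) hg, hgw0, mul_one]
      have hd1 : n ∣ c g + ∑ g' ∈ c.support.erase g, c g' * g' w0 := by
        rw [← hsplit, ← h1]; exact ⟨x w0, rfl⟩
      have hd2 : n ∣ ∑ g' ∈ c.support.erase g, c g' * g' w0 :=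
        Finset.dvd_sum (fun g' hg' => hdvd g' (Finset.mem_of_mem_erase hg')
          (Finset.ne_of_mem_erase hg'))
      have := dvd_sub hd1 hd2
      simpa using this
  have hdvdall : ∀ g ∈ c.support, n ∣ c g := fun g hg => key (μ g) g hg rfl
  -- build the quotient combination
  set y : Vx C → ℤ := ∑ g ∈ c.support, (c g / n) • g with hy
  have hyx : x = y := by
    have hny : n • y = n • x := by
      rw [hy, Finset.smul_sum, ← hsum, Finsupp.sum]
      apply Finset.sum_congr rfl
      intro g hg
      rw [smul_smul, Int.mul_ediv_cancel' (hdvdall g hg)]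
    exact (smul_right_injective (Vx C → ℤ) hn hny).symm
  rw [hyx, hy]
  exact Submodule.sum_mem _ (fun g hg => Submodule.smul_mem _ _ (Submodule.subset_span (hsupp hg)))

lemma noZeroSMul {C : Finset (ℤ × ℤ)} {D : Set (ℤ × ℤ)} (hD : ∀ a ∈ D, a ∈ C) :
    NoZeroSMulDivisors ℤ ((Vx C → ℤ) ⧸ Lam C D) := by
  constructor
  intro n x h
  by_cases hn : n = 0
  · exact Or.inl hn
  · right
    obtain ⟨x', rfl⟩ := Submodule.Quotient.mk_surjective _ x
    rw [← Submodule.Quotient.mk_smul, Submodule.Quotient.mk_eq_zero] at h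
    rw [Submodule.Quotient.mk_eq_zero]
    exact smul_mem_Lam hD hn h

end Stmt4Aux
namespace Stmt4Aux

open MvPolynomial

variable {K : Type*} [Field K]

lemma prod_single {ι G : Type*} [AddCommMonoid G] (s : Finset ι) (g : ι → G) :
    ∏ i ∈ s, (AddMonoidAlgebra.single (g i) (1 : K)) =
      AddMonoidAlgebra.single (∑ i ∈ s, g i) 1 := by
  classical
  induction s using Finset.induction with
  | empty => simp [AddMonoidAlgebra.one_def]
  | insert _ _ h ih =>
    rw [Finset.prod_insert h, ih, AddMonoidAlgebra.single_mul_single, Finset.sum_insert h,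
      one_mul]

lemma prod_X_pow_univ {C : Finset (ℤ × ℤ)} (m : Vx C →₀ ℕ) :
    ∏ w : Vx C, (X w : MvPolynomial (Vx C) K) ^ (m w) = monomial m 1 := by
  classical
  rw [← MvPolynomial.prod_X_pow_eq_monomial]
  exact (Finset.prod_subset (Finset.subset_univ _) (by
    intro w _ hw
    rw [Finsupp.notMem_support_iff.1 hw, pow_zero])).symm

/-- lift a `ℕ`-exponent vector to `ℤ`. -/
def liftI {C : Finset (ℤ × ℤ)} (m : Vx C →₀ ℕ) : Vx C → ℤ := fun w => (m w : ℤ)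

/-- The coset of a monomial. -/
noncomputable def Qm {C : Finset (ℤ × ℤ)} (D : Set (ℤ × ℤ)) (m : Vx C →₀ ℕ) :
    (Vx C → ℤ) ⧸ Lam C D :=
  Submodule.Quotient.mk (liftI m)

/-- The monomial map into the group algebra of the quotient group. -/
noncomputable def phi (K : Type*) [Field K] (C : Finset (ℤ × ℤ)) (W : Set (ℤ × ℤ)) :
    MvPolynomial (Vx C) K →ₐ[K]
      AddMonoidAlgebra K ((Vx C → ℤ) ⧸ Lam C (subcollW C W)) := by
  classical
  exact aeval fun v => if v.1 ∈ W then 0 else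
    AddMonoidAlgebra.single (Submodule.Quotient.mk (Pi.single v 1)) 1

lemma sum_single_eq_liftI {C : Finset (ℤ × ℤ)} (m : Vx C →₀ ℕ) :
    (∑ i ∈ m.support, (m i : ℤ) • Pi.single i (1 : ℤ)) = liftI m := by
  classical
  funext w
  rw [Finset.sum_apply]
  simp only [Pi.smul_apply, Pi.single_apply, smul_eq_mul, mul_ite, mul_one, mul_zero]
  rw [Finset.sum_ite_eq m.support w (fun i => (m i : ℤ))]
  by_cases hw : w ∈ m.support
  · rw [if_pos hw]; rfl
  · rw [if_neg hw]
    have := Finsupp.notMem_support_iff.1 hw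
    simp [liftI, this]

lemma phi_monomial_free {C : Finset (ℤ × ℤ)} {W : Set (ℤ × ℤ)} (m : Vx C →₀ ℕ) (c : K)
    (hfree : ∀ w : Vx C, w.1 ∈ W → m w = 0) :
    phi K C W (monomial m c) = AddMonoidAlgebra.single (Qm (subcollW C W) m) c := by
  classical
  rw [phi, aeval_monomial]
  have hprod : (m.prod fun i k => (if i.1 ∈ W then 0 else
      AddMonoidAlgebra.single (Submodule.Quotient.mk (Pi.single i 1) :
        (Vx C → ℤ) ⧸ Lam C (subcollW C W)) (1:K)) ^ k)
      = AddMonoidAlgebra.single (Qm (subcollW C W) m) 1 := by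
    rw [Finsupp.prod]
    have : ∀ i ∈ m.support, (if i.1 ∈ W then 0 else
        AddMonoidAlgebra.single (Submodule.Quotient.mk (Pi.single i 1) :
          (Vx C → ℤ) ⧸ Lam C (subcollW C W)) (1:K)) ^ (m i)
        = AddMonoidAlgebra.single ((m i : ℤ) • (Submodule.Quotient.mk (Pi.single i 1) :
            (Vx C → ℤ) ⧸ Lam C (subcollW C W))) 1 := by
      intro i hi
      have hiW : i.1 ∉ W := fun h => Finsupp.mem_support_iff.1 hi (hfree i h)
      rw [if_neg hiW, AddMonoidAlgebra.single_pow, one_pow, natCast_zsmul]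
    rw [Finset.prod_congr rfl this, prod_single]
    congr 1
    have h2 : ∀ i ∈ m.support, (m i : ℤ) • (Submodule.Quotient.mk (Pi.single i 1) :
        (Vx C → ℤ) ⧸ Lam C (subcollW C W))
        = (Lam C (subcollW C W)).mkQ ((m i : ℤ) • Pi.single i 1) := by
      intro i _
      rw [map_smul, Submodule.mkQ_apply]
    rw [Finset.sum_congr rfl h2, ← map_sum, sum_single_eq_liftI]
    rfl
  rw [hprod]
  have : (algebraMap K (AddMonoidAlgebra K ((Vx C → ℤ) ⧸ Lam C (subcollW C W)))) c
      = AddMonoidAlgebra.single 0 c := by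
    rw [AddMonoidAlgebra.coe_algebraMap]; simp
  rw [this, AddMonoidAlgebra.single_mul_single, zero_add, mul_one]

end Stmt4Aux
namespace Stmt4Aux

open MvPolynomial

variable {K : Type*} [Field K]

lemma phi_monomial_notfree {C : Finset (ℤ × ℤ)} {W : Set (ℤ × ℤ)} (m : Vx C →₀ ℕ) (c : K)
    (h : ∃ w : Vx C, w.1 ∈ W ∧ m w ≠ 0) :
    phi K C W (monomial m c) = 0 := by
  classical
  obtain ⟨w, hwW, hw⟩ := h
  rw [phi, aeval_monomial]
  have hw' : w ∈ m.support := Finsupp.mem_support_iff.2 hw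
  rw [Finsupp.prod, Finset.prod_eq_zero hw' (by rw [if_pos hwW, zero_pow hw]), mul_zero]

lemma lam_vanish {C : Finset (ℤ × ℤ)} {W : Set (ℤ × ℤ)} {e : Vx C → ℤ}
    (he : e ∈ Lam C (subcollW C W)) : ∀ w : Vx C, w.1 ∈ W → e w = 0 := by
  let H : Submodule ℤ (Vx C → ℤ) :=
    { carrier := {f | ∀ w : Vx C, w.1 ∈ W → f w = 0}
      add_mem' := fun hf hg w hw => by
        rw [Pi.add_apply, hf w hw, hg w hw, add_zero]
      zero_mem' := fun w _ => rfl
      smul_mem' := fun c f hf w hw => by rw [Pi.smul_apply, hf w hw, smul_zero] }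
  have hle : Lam C (subcollW C W) ≤ H := by
    apply Submodule.span_le.2
    rintro g ⟨a, haD, rfl⟩ w hw
    rw [cellVec_apply]
    have h00 : w.1 ≠ a := fun h => haD.2 a (corner_mem00 a) (h ▸ hw)
    have h11 : w.1 ≠ a + (1, 1) := fun h => haD.2 _ (corner_mem11 a) (h ▸ hw)
    have h01 : w.1 ≠ a + (0, 1) := fun h => haD.2 _ (corner_mem01 a) (h ▸ hw)
    have h10 : w.1 ≠ a + (1, 0) := fun h => haD.2 _ (corner_mem10 a) (h ▸ hw)
    rw [if_neg h00, if_neg h11, if_neg h01, if_neg h10]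
    ring
  exact hle he

/-- positive part of an exponent vector. -/
noncomputable def mpos {C : Finset (ℤ × ℤ)} (e : Vx C → ℤ) : Vx C →₀ ℕ :=
  Finsupp.equivFunOnFinite.symm (fun w => (e w).toNat)

lemma mpos_apply {C : Finset (ℤ × ℤ)} (e : Vx C → ℤ) (w : Vx C) :
    mpos e w = (e w).toNat := rfl

lemma latticeGen_mem {C : Finset (ℤ × ℤ)} {D : Set (ℤ × ℤ)} {e : Vx C → ℤ}
    (he : e ∈ cellLattice C D) :
    monomial (mpos e) (1 : K) - monomial (mpos (-e)) 1 ∈ latticeIdeal K C D := by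
  have h1 : ∏ w : Vx C, (X w : MvPolynomial (Vx C) K) ^ ((e w).toNat) = monomial (mpos e) 1 := by
    rw [← prod_X_pow_univ]
    exact Finset.prod_congr rfl (fun w _ => by rw [mpos_apply])
  have h2 : ∏ w : Vx C, (X w : MvPolynomial (Vx C) K) ^ ((-(e w)).toNat)
      = monomial (mpos (-e)) 1 := by
    rw [← prod_X_pow_univ]
    exact Finset.prod_congr rfl (fun w _ => by rw [mpos_apply, Pi.neg_apply])
  exact Ideal.subset_span ⟨e, he, by rw [h1, h2]⟩

lemma binom_mem {C : Finset (ℤ × ℤ)} {D : Set (ℤ × ℤ)} {m m' : Vx C →₀ ℕ}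
    (h : Qm D m = Qm D m') :
    monomial m (1 : K) - monomial m' 1 ∈ latticeIdeal K C D := by
  classical
  set e : Vx C → ℤ := liftI m - liftI m' with hedef
  have he : e ∈ Lam C D := by
    rw [Qm, Qm, Submodule.Quotient.eq] at h
    exact h
  have he' : e ∈ cellLattice C D := mem_cellLattice_iff.2 he
  set h0 : Vx C →₀ ℕ := Finsupp.equivFunOnFinite.symm (fun w => min (m w) (m' w)) with hh0
  have hm : h0 + mpos e = m := by
    ext w
    have : h0 w = min (m w) (m' w) := rfl
    rw [Finsupp.add_apply, this, mpos_apply]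
    have : e w = (m w : ℤ) - (m' w : ℤ) := rfl
    rw [this]
    omega
  have hm' : h0 + mpos (-e) = m' := by
    ext w
    have h1 : h0 w = min (m w) (m' w) := rfl
    rw [Finsupp.add_apply, h1, mpos_apply]
    have : (-e) w = (m' w : ℤ) - (m w : ℤ) := by
      rw [Pi.neg_apply]
      show -(liftI m w - liftI m' w) = _
      rw [liftI, liftI]
      ring
    rw [this]
    omega
  have hcalc : monomial m (1:K) - monomial m' 1
      = monomial h0 1 * (monomial (mpos e) 1 - monomial (mpos (-e)) 1) := by
    rw [mul_sub, monomial_mul, monomial_mul, one_mul, hm, hm']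
  rw [hcalc]
  exact Ideal.mul_mem_left _ _ (latticeGen_mem he')

end Stmt4Aux
namespace Stmt4Aux

open MvPolynomial

variable {K : Type*} [Field K]

lemma prod_pow_toNat {C : Finset (ℤ × ℤ)} (e : Vx C → ℤ) :
    ∏ w : Vx C, (X w : MvPolynomial (Vx C) K) ^ ((e w).toNat) = monomial (mpos e) 1 := by
  rw [← prod_X_pow_univ]
  exact Finset.prod_congr rfl (fun w _ => by rw [mpos_apply])

lemma lattice_le_ker {C : Finset (ℤ × ℤ)} {W : Set (ℤ × ℤ)} :
    latticeIdeal K C (subcollW C W) ≤ RingHom.ker (phi K C W) := by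
  apply Ideal.span_le.2
  rintro f ⟨e, he, rfl⟩
  have heL : e ∈ Lam C (subcollW C W) := mem_cellLattice_iff.1 he
  have h2 : ∏ w : Vx C, (X w : MvPolynomial (Vx C) K) ^ ((-(e w)).toNat)
      = monomial (mpos (-e)) 1 := by
    rw [← prod_pow_toNat (-e)]
    exact Finset.prod_congr rfl (fun w _ => by rw [Pi.neg_apply])
  have hvan := lam_vanish heL
  rw [SetLike.mem_coe, RingHom.mem_ker, prod_pow_toNat, h2, map_sub,
    phi_monomial_free _ _ (fun w hw => by rw [mpos_apply, hvan w hw]; rfl),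
    phi_monomial_free _ _ (fun w hw => by
      rw [mpos_apply, Pi.neg_apply, hvan w hw]; rfl)]
  have : Qm (subcollW C W) (mpos e) = Qm (subcollW C W) (mpos (-e)) := by
    rw [Qm, Qm, Submodule.Quotient.eq]
    have : liftI (mpos e) - liftI (mpos (-e)) = e := by
      funext w
      show ((mpos e w : ℤ)) - ((mpos (-e) w : ℤ)) = e w
      rw [mpos_apply, mpos_apply, Pi.neg_apply]
      omega
    rwa [this]
  rw [this, sub_self]

lemma vars_le_ker {C : Finset (ℤ × ℤ)} {W : Set (ℤ × ℤ)} :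
    Ideal.span {f : MvPolynomial (Vx C) K | ∃ v : Vx C, v.1 ∈ W ∧ f = X v}
      ≤ RingHom.ker (phi K C W) := by
  apply Ideal.span_le.2
  rintro f ⟨v, hvW, rfl⟩
  rw [SetLike.mem_coe, RingHom.mem_ker, phi, aeval_X, if_pos hvW]

lemma PW_le_ker {C : Finset (ℤ × ℤ)} {W : Set (ℤ × ℤ)} :
    PW K C W ≤ RingHom.ker (phi K C W) := by
  rw [PW, Submodule.add_eq_sup]
  exact sup_le vars_le_ker lattice_le_ker

end Stmt4Aux
namespace Stmt4Aux

open MvPolynomial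

variable {K : Type*} [Field K]

lemma key_induction {C : Finset (ℤ × ℤ)} {W : Set (ℤ × ℤ)} :
    ∀ N : ℕ, ∀ g : MvPolynomial (Vx C) K, g.support.card ≤ N →
      (∀ m ∈ g.support, ∀ w : Vx C, w.1 ∈ W → m w = 0) →
      phi K C W g = 0 → g ∈ latticeIdeal K C (subcollW C W) := by
  classical
  intro N
  induction N with
  | zero =>
    intro g hcard _ _
    have : g.support = ∅ := Finset.card_eq_zero.1 (Nat.le_zero.1 hcard)
    rw [MvPolynomial.support_eq_empty.1 this]
    exact Submodule.zero_mem _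
  | succ N ih =>
    intro g hcard hfree hker
    by_cases hg0 : g = 0
    · rw [hg0]; exact Submodule.zero_mem _
    obtain ⟨m0, hm0⟩ := MvPolynomial.support_nonempty.2 hg0
    have hc0 : coeff m0 g ≠ 0 := MvPolynomial.mem_support_iff.1 hm0
    have hrepr : phi K C W g = ∑ m ∈ g.support,
        AddMonoidAlgebra.single (Qm (subcollW C W) m) (coeff m g) := by
      conv_lhs => rw [as_sum g]
      rw [map_sum]
      exact Finset.sum_congr rfl (fun m hm => phi_monomial_free m _ (hfree m hm))
    have happ : (0 : K) = ∑ m ∈ g.support,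
        if Qm (subcollW C W) m = Qm (subcollW C W) m0 then coeff m g else 0 := by
      have h := hker.symm.trans hrepr
      have h2 : (0 : K) = (∑ m ∈ g.support,
          AddMonoidAlgebra.single (Qm (subcollW C W) m) (coeff m g)).coeff (Qm (subcollW C W) m0) := by
        rw [← h]; rfl
      rw [AddMonoidAlgebra.coeff_sum, Finset.sum_apply'] at h2
      exact h2.trans (Finset.sum_congr rfl (fun m _ => AddMonoidAlgebra.coeff_single_apply))
    have hex : ∃ m1 ∈ g.support, m1 ≠ m0 ∧
        Qm (subcollW C W) m1 = Qm (subcollW C W) m0 := by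
      by_contra hcon
      push_neg at hcon
      rw [Finset.sum_eq_single_of_mem m0 hm0 (fun m hm hne => by
        rw [if_neg (hcon m hm hne)]), if_pos rfl] at happ
      exact hc0 happ.symm
    obtain ⟨m1, hm1, hne10, hQ⟩ := hex
    set bin : MvPolynomial (Vx C) K := monomial m0 1 - monomial m1 1 with hbin
    have hbinL : bin ∈ latticeIdeal K C (subcollW C W) := binom_mem hQ.symm
    set g' : MvPolynomial (Vx C) K := g - (coeff m0 g) • bin with hg'
    have hcoe : ∀ m, coeff m g' = coeff m g -
        (coeff m0 g) * ((if m0 = m then 1 else 0) - (if m1 = m then 1 else 0)) := by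
      intro m
      rw [hg', coeff_sub, coeff_smul, hbin, coeff_sub, coeff_monomial, coeff_monomial,
        smul_eq_mul]
    have hsupp' : g'.support ⊆ g.support.erase m0 := by
      intro m hm
      have hcm := MvPolynomial.mem_support_iff.1 hm
      rw [hcoe m] at hcm
      by_cases hmm0 : m = m0
      · exfalso
        subst hmm0
        apply hcm
        rw [if_pos rfl, if_neg hne10]
        ring
      · refine Finset.mem_erase.2 ⟨hmm0, ?_⟩
        by_cases hmm1 : m = m1
        · exact hmm1 ▸ hm1
        · rw [if_neg (fun h => hmm0 h.symm), if_neg (fun h => hmm1 h.symm)] at hcm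
          apply MvPolynomial.mem_support_iff.2
          intro h
          apply hcm
          rw [h]
          ring
    have hcard' : g'.support.card ≤ N := by
      have h1 : (g.support.erase m0).card = g.support.card - 1 :=
        Finset.card_erase_of_mem hm0
      have h2 : g'.support.card ≤ (g.support.erase m0).card := Finset.card_le_card hsupp'
      have h3 : 1 ≤ g.support.card := Finset.card_pos.2 ⟨m0, hm0⟩
      omega
    have hfree' : ∀ m ∈ g'.support, ∀ w : Vx C, w.1 ∈ W → m w = 0 :=
      fun m hm => hfree m (Finset.mem_of_mem_erase (hsupp' hm))
    have hker' : phi K C W g' = 0 := by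
      rw [hg', map_sub, map_smul, RingHom.mem_ker.1 (lattice_le_ker hbinL), smul_zero,
        sub_zero, hker]
    have hg'L := ih g' hcard' hfree' hker'
    have : g = g' + (coeff m0 g) • bin := by rw [hg']; ring
    rw [this]
    refine Submodule.add_mem _ hg'L ?_
    rw [MvPolynomial.smul_eq_C_mul]
    exact Ideal.mul_mem_left _ _ hbinL

end Stmt4Aux
namespace Stmt4Aux

open MvPolynomial

variable {K : Type*} [Field K]

lemma ker_le_PW {C : Finset (ℤ × ℤ)} {W : Set (ℤ × ℤ)} :
    RingHom.ker (phi K C W) ≤ PW K C W := by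
  classical
  intro f hf
  rw [RingHom.mem_ker] at hf
  set Wfree : (Vx C →₀ ℕ) → Prop := fun m => ∀ w : Vx C, w.1 ∈ W → m w = 0 with hWfree
  set f0 : MvPolynomial (Vx C) K :=
    ∑ m ∈ f.support.filter Wfree, monomial m (coeff m f) with hf0
  set f1 : MvPolynomial (Vx C) K :=
    ∑ m ∈ f.support.filter (fun m => ¬ Wfree m), monomial m (coeff m f) with hf1
  have hsplit : f = f0 + f1 := by
    conv_lhs => rw [as_sum f]
    rw [hf0, hf1, Finset.sum_filter_add_sum_filter_not]
  have hf1mem : f1 ∈ Ideal.span {h : MvPolynomial (Vx C) K | ∃ v : Vx C, v.1 ∈ W ∧ h = X v} := by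
    apply Submodule.sum_mem
    intro m hm
    obtain ⟨hmsupp, hmnf⟩ := Finset.mem_filter.1 hm
    have hm2 : ∃ w : Vx C, w.1 ∈ W ∧ m w ≠ 0 := by
      by_contra hc
      push_neg at hc
      exact hmnf (fun w hw => hc w hw)
    obtain ⟨w, hwW, hw⟩ := hm2
    have hexp : Finsupp.single w 1 + (m - Finsupp.single w 1) = m := by
      ext w'
      rw [Finsupp.add_apply, Finsupp.tsub_apply, Finsupp.single_apply]
      by_cases h : w = w'
      · subst h
        rw [if_pos rfl]
        omega
      · rw [if_neg h]
        omega
    have hmono : monomial m (coeff m f) =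
        (X w : MvPolynomial (Vx C) K) * monomial (m - Finsupp.single w 1) (coeff m f) := by
      rw [X, monomial_mul, one_mul, hexp]
    rw [hmono]
    exact Ideal.mul_mem_right _ _ (Ideal.subset_span ⟨w, hwW, rfl⟩)
  have hphif1 : phi K C W f1 = 0 := by
    rw [hf1, map_sum]
    apply Finset.sum_eq_zero
    intro m hm
    obtain ⟨hmsupp, hmnf⟩ := Finset.mem_filter.1 hm
    have hm2 : ∃ w : Vx C, w.1 ∈ W ∧ m w ≠ 0 := by
      by_contra hc
      push_neg at hc
      exact hmnf (fun w hw => hc w hw)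
    exact phi_monomial_notfree m _ hm2
  have hphif0 : phi K C W f0 = 0 := by
    have := hf
    rw [hsplit, map_add, hphif1, add_zero] at this
    exact this
  have hfreef0 : ∀ m ∈ f0.support, ∀ w : Vx C, w.1 ∈ W → m w = 0 := by
    intro m hm
    have hcm := MvPolynomial.mem_support_iff.1 hm
    have hco : coeff m f0 = if m ∈ f.support.filter Wfree then coeff m f else 0 := by
      rw [hf0, coeff_sum]
      have : ∀ m' ∈ f.support.filter Wfree,
          coeff m (monomial m' (coeff m' f)) = if m' = m then coeff m' f else 0 :=
        fun m' _ => coeff_monomial m m' (coeff m' f)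
      rw [Finset.sum_congr rfl this, Finset.sum_ite_eq' (f.support.filter Wfree) m
        (fun m' => coeff m' f)]
    rw [hco] at hcm
    by_cases h : m ∈ f.support.filter Wfree
    · exact (Finset.mem_filter.1 h).2
    · exact absurd (if_neg h) hcm
  have hf0mem := key_induction f0.support.card f0 le_rfl hfreef0 hphif0
  rw [hsplit, PW, Submodule.add_eq_sup]
  exact Submodule.add_mem _ (Submodule.mem_sup_right hf0mem) (Submodule.mem_sup_left hf1mem)

lemma PW_eq_ker {C : Finset (ℤ × ℤ)} {W : Set (ℤ × ℤ)} :
    PW K C W = RingHom.ker (phi K C W) :=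
  le_antisymm PW_le_ker ker_le_PW

end Stmt4Aux
namespace Stmt4Aux

open MvPolynomial

variable {K : Type*} [Field K]

lemma isDomain_target (K : Type*) [Field K] (C : Finset (ℤ × ℤ)) (W : Set (ℤ × ℤ)) :
    IsDomain (AddMonoidAlgebra K ((Vx C → ℤ) ⧸ Lam C (subcollW C W))) := by
  haveI h1 : NoZeroSMulDivisors ℤ ((Vx C → ℤ) ⧸ Lam C (subcollW C W)) :=
    noZeroSMul (fun a ha => ha.1)
  haveI h2 : Module.Finite ℤ ((Vx C → ℤ) ⧸ Lam C (subcollW C W)) :=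
    Module.Finite.of_surjective (Lam C (subcollW C W)).mkQ
      (Submodule.mkQ_surjective _)
  haveI h3 : Module.Free ℤ ((Vx C → ℤ) ⧸ Lam C (subcollW C W)) := inferInstance
  set b := Module.Free.chooseBasis ℤ ((Vx C → ℤ) ⧸ Lam C (subcollW C W)) with hb
  haveI h4 : UniqueSums ((Vx C → ℤ) ⧸ Lam C (subcollW C W)) :=
    UniqueSums.of_injective_addHom b.repr.toLinearMap.toAddMonoidHom.toAddHom
      b.repr.injective inferInstance
  exact NoZeroDivisors.to_isDomain _

lemma PW_isPrime (K : Type*) [Field K] (C : Finset (ℤ × ℤ)) (W : Set (ℤ × ℤ)) :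
    (PW K C W).IsPrime := by
  haveI := isDomain_target K C W
  rw [PW_eq_ker]
  exact RingHom.ker_isPrime _

end Stmt4Aux
namespace Stmt4Aux

open MvPolynomial

variable {K : Type*} [Field K]

set_option maxHeartbeats 400000 in
lemma minor_eq_latticeGen {C : Finset (ℤ × ℤ)} {a : ℤ × ℤ} (ha : a ∈ C) :
    (X ⟨a, mem_verts ha (corner_mem00 a)⟩ : MvPolynomial (Vx C) K) *
        X ⟨a + (1, 1), mem_verts ha (corner_mem11 a)⟩ -
      X ⟨a + (0, 1), mem_verts ha (corner_mem01 a)⟩ *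
        X ⟨a + (1, 0), mem_verts ha (corner_mem10 a)⟩
    = monomial (mpos (cellVec C a)) 1 - monomial (mpos (-(cellVec C a))) 1 := by
  classical
  have h1 : Finsupp.single (⟨a, mem_verts ha (corner_mem00 a)⟩ : Vx C) 1 +
      Finsupp.single (⟨a + (1, 1), mem_verts ha (corner_mem11 a)⟩ : Vx C) 1
      = mpos (cellVec C a) := by
    ext w
    rw [Finsupp.add_apply, Finsupp.single_apply, Finsupp.single_apply, mpos_apply,
      cellVec_apply]
    simp only [Subtype.ext_iff, Prod.ext_iff, Prod.fst_add, Prod.snd_add]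
    split_ifs <;> omega
  have h2 : Finsupp.single (⟨a + (0, 1), mem_verts ha (corner_mem01 a)⟩ : Vx C) 1 +
      Finsupp.single (⟨a + (1, 0), mem_verts ha (corner_mem10 a)⟩ : Vx C) 1
      = mpos (-(cellVec C a)) := by
    ext w
    rw [Finsupp.add_apply, Finsupp.single_apply, Finsupp.single_apply, mpos_apply,
      Pi.neg_apply, cellVec_apply]
    simp only [Subtype.ext_iff, Prod.ext_iff, Prod.fst_add, Prod.snd_add]
    split_ifs <;> omega
  rw [X, X, X, X, monomial_mul, monomial_mul, one_mul, h1, h2]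

lemma adj_le_PW (K : Type*) [Field K] (C : Finset (ℤ × ℤ)) (W : Set (ℤ × ℤ))
    (hW : Admissible C W) : adjIdeal K C ≤ PW K C W := by
  classical
  apply Ideal.span_le.2
  rintro f ⟨a, ha, rfl⟩
  rw [PW, Submodule.add_eq_sup, SetLike.mem_coe]
  rcases hW.2 a ha with hnone | ⟨e, he, he1, he2⟩
  · -- cell disjoint from W : lattice binomial
    apply Submodule.mem_sup_right
    rw [minor_eq_latticeGen ha]
    exact latticeGen_mem (AddSubgroup.subset_closure ⟨a, ⟨ha, hnone⟩, rfl⟩)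
  · -- an edge inside W : both monomials in the variable ideal
    apply Submodule.mem_sup_left
    have hmem : ∀ (v : Vx C), v.1 ∈ W →
        (X v : MvPolynomial (Vx C) K) ∈
          Ideal.span {f : MvPolynomial (Vx C) K | ∃ v : Vx C, v.1 ∈ W ∧ f = X v} :=
      fun v hv => Ideal.subset_span ⟨v, hv, rfl⟩
    simp only [cellEdges, Finset.mem_insert, Finset.mem_singleton] at he
    rcases he with rfl | rfl | rfl | rfl
    · exact sub_mem (Ideal.mul_mem_right _ _ (hmem _ he1))
        (Ideal.mul_mem_right _ _ (hmem _ he2))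
    · exact sub_mem (Ideal.mul_mem_left _ _ (hmem _ he2))
        (Ideal.mul_mem_right _ _ (hmem _ he1))
    · exact sub_mem (Ideal.mul_mem_left _ _ (hmem _ he1))
        (Ideal.mul_mem_left _ _ (hmem _ he2))
    · exact sub_mem (Ideal.mul_mem_right _ _ (hmem _ he1))
        (Ideal.mul_mem_left _ _ (hmem _ he2))

end Stmt4Aux

/-- For an admissible set `W` of `𝒞`, the ideal
`P_W(𝒞) = (x_w : w ∈ W) + L_{𝒞_W}` is a prime ideal containing `I_adj(𝒞)`. -/
theorem stmt_4 (K : Type*) [Field K] (C : Finset (ℤ × ℤ)) (hC : C.Nonempty)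
    (W : Set (ℤ × ℤ)) (hW : Admissible C W) :
    (PW K C W).IsPrime ∧ adjIdeal K C ≤ PW K C W :=
  ⟨Stmt4Aux.PW_isPrime K C W, Stmt4Aux.adj_le_PW K C W hW⟩
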